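/- Let n ≥ 3 be odd, let 0 < a_1 ≤ a_2 ≤ … ≤ a_n, and let A_1,…,A_{(n−1)/2} ≥ 0 with at least one A_k ≠ 0. Define the polynomial P(x) = (x+a_1)(x+a_2)⋯(x+a_n) + Σ_{k=1}^{(n−1)/2} A_k x^{2k−1}. Then P has exactly one real root in the open interval (−a_1, 0), and P has at most two real roots in the open interval (−a_n, −a_{n−1}). -/

import Mathlib

open Set Finset


/-- MVT + strictly antitone derivative: no three zeros. -/
lemma aux_no_three {l r : ℝ} {f f' : ℝ → ℝ}
    (hd : ∀ x ∈ Set.Ioo l r, HasDerivAt f (f' x) x)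
    (hanti : StrictAntiOn f' (Set.Ioo l r))
    {x y z : ℝ} (hx : x ∈ Set.Ioo l r) (hy : y ∈ Set.Ioo l r) (hz : z ∈ Set.Ioo l r)
    (hxy : x < y) (hyz : y < z)
    (fx : f x = 0) (fy : f y = 0) (fz : f z = 0) : False := by
  have hsub1 : Set.Icc x y ⊆ Set.Ioo l r := fun w hw =>
    ⟨lt_of_lt_of_le hx.1 hw.1, lt_of_le_of_lt hw.2 hy.2⟩
  have hsub2 : Set.Icc y z ⊆ Set.Ioo l r := fun w hw =>
    ⟨lt_of_lt_of_le hy.1 hw.1, lt_of_le_of_lt hw.2 hz.2⟩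
  have hc1 : ContinuousOn f (Set.Icc x y) := fun w hw =>
    (hd w (hsub1 hw)).continuousAt.continuousWithinAt
  have hc2 : ContinuousOn f (Set.Icc y z) := fun w hw =>
    (hd w (hsub2 hw)).continuousAt.continuousWithinAt
  obtain ⟨c, hc, hc'⟩ := exists_hasDerivAt_eq_slope f f' hxy hc1
    (fun w hw => hd w (hsub1 (Set.mem_Icc_of_Ioo hw)))
  obtain ⟨d, hdm, hd'⟩ := exists_hasDerivAt_eq_slope f f' hyz hc2
    (fun w hw => hd w (hsub2 (Set.mem_Icc_of_Ioo hw)))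
  rw [fx, fy, sub_zero, zero_div] at hc'
  rw [fy, fz, sub_zero, zero_div] at hd'
  have hcd : c < d := hc.2.trans hdm.1
  have := hanti (hsub1 (Set.mem_Icc_of_Ioo hc)) (hsub2 (Set.mem_Icc_of_Ioo hdm)) hcd
  rw [hc', hd'] at this
  exact lt_irrefl 0 this

lemma aux_encard_le_two {s : Set ℝ}
    (h : ∀ x y z, x ∈ s → y ∈ s → z ∈ s → x < y → y < z → False) :
    s.encard ≤ 2 := by
  by_contra hc
  push_neg at hc
  have h3 : (3 : ℕ∞) ≤ s.encard := by
    have := (ENat.add_one_le_iff (by decide)).2 hc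
    exact le_trans (le_of_eq (by norm_num)) this
  obtain ⟨t, hts, ht3⟩ := Set.exists_subset_encard_eq h3
  obtain ⟨a, b, c, hab, hac, hbc, rfl⟩ := Set.encard_eq_three.1 ht3
  have ha : a ∈ s := hts (by simp)
  have hb : b ∈ s := hts (by simp)
  have hc' : c ∈ s := hts (by simp)
  rcases hab.lt_or_gt with h1 | h1 <;> rcases hac.lt_or_gt with h2 | h2 <;>
      rcases hbc.lt_or_gt with h3 | h3
  · exact h a b c ha hb hc' h1 h3
  · exact h a c b ha hc' hb h2 h3
  · linarith
  · exact h c a b hc' ha hb h2 h1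
  · exact h b a c hb ha hc' h1 h2
  · linarith
  · exact h b c a hb hc' ha h3 h2
  · exact h c b a hc' hb ha h3 h1


/-- Key symmetrization inequality:  S₁² - S₂'·S ≤ (2m-1)·S²  where all sums use
exponent 2j+1. -/
lemma aux_key (m : ℕ) (B : ℕ → ℝ) (hB : ∀ j < m, 0 ≤ B j) (x : ℝ) :
    (∑ j ∈ range m, B j * ((2*(j:ℝ)+1) * x^(2*j+1)))^2
      - (∑ j ∈ range m, B j * ((2*(j:ℝ)+1) * (2*(j:ℝ) * x^(2*j+1))))
        * (∑ j ∈ range m, B j * x^(2*j+1))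
    ≤ (2*(m:ℝ)-1) * (∑ j ∈ range m, B j * x^(2*j+1))^2 := by
  set F : ℕ → ℝ := fun j => B j * x^(2*j+1) with hF
  set G : ℕ → ℝ := fun j => B j * ((2*(j:ℝ)+1) * x^(2*j+1)) with hG
  set H : ℕ → ℝ := fun j => B j * ((2*(j:ℝ)+1) * (2*(j:ℝ) * x^(2*j+1))) with hH
  set C : ℝ := 2*(m:ℝ)-1 with hC
  have e1 : (∑ j ∈ range m, G j)^2 = ∑ j ∈ range m, ∑ l ∈ range m, G j * G l := by
    rw [sq, Finset.sum_mul_sum]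
  have e2 : (∑ j ∈ range m, H j) * (∑ j ∈ range m, F j)
      = ∑ j ∈ range m, ∑ l ∈ range m, H j * F l := by
    rw [Finset.sum_mul_sum]
  have e3 : C * (∑ j ∈ range m, F j)^2 = ∑ j ∈ range m, ∑ l ∈ range m, C * (F j * F l) := by
    rw [sq, Finset.sum_mul_sum, Finset.mul_sum]
    exact Finset.sum_congr rfl fun j _ => by rw [Finset.mul_sum]
  rw [e1, e2, e3, ← Finset.sum_sub_distrib]
  have hsplit : ∀ j ∈ range m, (∑ l ∈ range m, G j * G l) - (∑ l ∈ range m, H j * F l)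
      = ∑ l ∈ range m, (G j * G l - H j * F l) := fun j _ => (Finset.sum_sub_distrib _ _).symm
  rw [Finset.sum_congr rfl hsplit]
  -- symmetrize
  set Φ : ℕ → ℕ → ℝ := fun j l => G j * G l - H j * F l with hΦ
  have hswap : ∑ j ∈ range m, ∑ l ∈ range m, Φ j l
      = ∑ j ∈ range m, ∑ l ∈ range m, Φ l j := Finset.sum_comm
  have hterm : ∀ j ∈ range m, ∀ l ∈ range m,
      Φ j l + Φ l j ≤ 2 * (C * (F j * F l)) := by
    intro j hj l hl
    have hj' : (j:ℝ) ≤ (m:ℝ) - 1 := by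
      have := Finset.mem_range.1 hj
      have : (j:ℝ) + 1 ≤ (m:ℝ) := by exact_mod_cast this
      linarith
    have hl' : (l:ℝ) ≤ (m:ℝ) - 1 := by
      have := Finset.mem_range.1 hl
      have : (l:ℝ) + 1 ≤ (m:ℝ) := by exact_mod_cast this
      linarith
    have huv : 0 ≤ x^(2*j+1) * x^(2*l+1) := by
      rw [← pow_add]
      exact Even.pow_nonneg ⟨j + l + 1, by ring⟩ x
    have hBB : 0 ≤ B j * B l :=
      mul_nonneg (hB j (Finset.mem_range.1 hj)) (hB l (Finset.mem_range.1 hl))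
    have expand : Φ j l + Φ l j = (B j * B l * (x^(2*j+1) * x^(2*l+1)))
        * (2*(2*(j:ℝ)+1)*(2*(l:ℝ)+1) - (2*(j:ℝ)+1)*(2*(j:ℝ)) - (2*(l:ℝ)+1)*(2*(l:ℝ))) := by
      simp only [hΦ, hF, hG, hH]; ring
    have hrhs : 2 * (C * (F j * F l))
        = (B j * B l * (x^(2*j+1) * x^(2*l+1))) * (2*C) := by
      simp only [hF, hC]; ring
    rw [expand, hrhs]
    apply mul_le_mul_of_nonneg_left _ (mul_nonneg hBB huv)
    have hp : 2*(j:ℝ)+1 ≤ C := by rw [hC]; linarith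
    have hq : 2*(l:ℝ)+1 ≤ C := by rw [hC]; linarith
    nlinarith [sq_nonneg (2*(j:ℝ) - 2*(l:ℝ))]
  have h2 : 2 * (∑ j ∈ range m, ∑ l ∈ range m, Φ j l)
      ≤ 2 * (∑ j ∈ range m, ∑ l ∈ range m, C * (F j * F l)) := by
    calc 2 * (∑ j ∈ range m, ∑ l ∈ range m, Φ j l)
        = (∑ j ∈ range m, ∑ l ∈ range m, Φ j l)
          + (∑ j ∈ range m, ∑ l ∈ range m, Φ l j) := by rw [← hswap]; ring
      _ = ∑ j ∈ range m, ∑ l ∈ range m, (Φ j l + Φ l j) := by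
          rw [← Finset.sum_add_distrib]
          exact Finset.sum_congr rfl fun j _ => (Finset.sum_add_distrib).symm
      _ ≤ ∑ j ∈ range m, ∑ l ∈ range m, 2 * (C * (F j * F l)) :=
          Finset.sum_le_sum fun j hj => Finset.sum_le_sum fun l hl => hterm j hj l hl
      _ = 2 * (∑ j ∈ range m, ∑ l ∈ range m, C * (F j * F l)) := by
          rw [Finset.mul_sum]
          exact Finset.sum_congr rfl fun j _ => by rw [Finset.mul_sum]
  linarith

section Test
variable (n m : ℕ) (hn : 3 ≤ n) (hm : n = 2*m+1) (hm1 : 1 ≤ m)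
  (a : Fin n → ℝ) (hpos : ∀ i, 0 < a i) (hmono : Monotone a)
  (B : ℕ → ℝ) (hBnn : ∀ j < m, 0 ≤ B j)
  (P : ℝ → ℝ)
  (hP' : ∀ x, P x = (∏ i, (x + a i)) + ∑ j ∈ Finset.range m, B j * x ^ (2 * j + 1))
  (hSneg : ∀ x : ℝ, x < 0 → (∑ j ∈ Finset.range m, B j * x ^ (2 * j + 1)) < 0)

include hn hm hm1 hpos hmono hBnn hP' hSneg in
set_option maxHeartbeats 1000000 in
theorem part2 :
    Set.encard {x ∈ Set.Ioo (-(a ⟨n - 1, by omega⟩)) (-(a ⟨n - 2, by omega⟩)) |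
      P x = 0} ≤ 2 := by
  set lst : Fin n := ⟨n - 1, by omega⟩ with hlst
  set b : ℝ := a lst with hbdef
  set c : ℝ := a ⟨n - 2, by omega⟩ with hcdef
  have hbpos : 0 < b := hpos _
  have hcpos : 0 < c := hpos _
  set E : Finset (Fin n) := Finset.univ.erase lst with hE
  have hcardE : E.card = n - 1 := by
    rw [hE, Finset.card_erase_of_mem (Finset.mem_univ _), Finset.card_univ, Fintype.card_fin]
  have haiE : ∀ i ∈ E, a i ≤ c := by
    intro i hi
    have hiv : i.val ≠ n - 1 := by
      intro h
      exact (Finset.mem_erase.1 hi).1 (Fin.ext (by rw [h]))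
    have : i ≤ (⟨n - 2, by omega⟩ : Fin n) := by
      rw [Fin.le_def]
      have := i.2
      simp only
      omega
    exact hmono this
  set S : ℝ → ℝ := fun x => ∑ j ∈ Finset.range m, B j * x ^ (2*j+1) with hS
  set S₁ : ℝ → ℝ := fun x => ∑ j ∈ Finset.range m, B j * ((2*(j:ℝ)+1) * x ^ (2*j)) with hS₁
  set S₂ : ℝ → ℝ := fun x =>
    ∑ j ∈ Finset.range m, B j * ((2*(j:ℝ)+1) * (2*(j:ℝ) * x ^ (2*j-1))) with hS₂
  have hSd : ∀ x : ℝ, HasDerivAt S (S₁ x) x := by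
    intro x
    rw [hS, hS₁]
    apply HasDerivAt.fun_sum
    intro j _
    have h := (hasDerivAt_pow (2*j+1) x).const_mul (B j)
    convert h using 1
    · rfl
    have he : 2*j+1-1 = 2*j := by omega
    rw [he]
    push_cast
    ring
  have hS₁d : ∀ x : ℝ, HasDerivAt S₁ (S₂ x) x := by
    intro x
    rw [hS₁, hS₂]
    apply HasDerivAt.fun_sum
    intro j _
    have h := ((hasDerivAt_pow (2*j) x).const_mul (2*(j:ℝ)+1)).const_mul (B j)
    convert h using 1
    · rfl
    push_cast
    ring
  -- basic facts on the interval
  have hxfacts : ∀ x ∈ Set.Ioo (-b) (-c), x < 0 ∧ 0 < x + b ∧ (∀ i ∈ E, x + a i < 0)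
      ∧ S x < 0 := by
    intro x hx
    have hx0 : x < 0 := lt_trans hx.2 (by linarith)
    refine ⟨hx0, by have := hx.1; linarith, ?_, hSneg x hx0⟩
    intro i hi
    have := haiE i hi
    have := hx.2
    linarith
  set G : ℝ → ℝ := fun x =>
    Real.log (x + b) + (∑ i ∈ E, Real.log (-(x + a i))) - Real.log (-(S x)) with hG
  set G₁ : ℝ → ℝ := fun x =>
    (x + b)⁻¹ + (∑ i ∈ E, (x + a i)⁻¹) - S₁ x / S x with hG₁
  set G₂ : ℝ → ℝ := fun x =>
    -1/(x + b)^2 + (∑ i ∈ E, -1/(x + a i)^2)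
      - (S₂ x * S x - S₁ x * S₁ x) / S x ^ 2 with hG₂
  have hSX' : ∀ x : ℝ, (∑ j ∈ Finset.range m, B j * x ^ (2*j+1)) = S x := fun x => by rw [hS]
  have hGd : ∀ x ∈ Set.Ioo (-b) (-c), HasDerivAt G (G₁ x) x := by
    intro x hx
    obtain ⟨hx0, hxb, hxa, hSx⟩ := hxfacts x hx
    have h1 : HasDerivAt (fun y : ℝ => Real.log (y + b)) ((x + b)⁻¹) x := by
      have := HasDerivAt.log ((hasDerivAt_id' x).add_const b) (ne_of_gt hxb)
      convert this using 1
      rw [one_div]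
    have h2 : ∀ i ∈ E, HasDerivAt (fun y : ℝ => Real.log (-(y + a i))) ((x + a i)⁻¹) x := by
      intro i hi
      have hne : -(x + a i) ≠ 0 := ne_of_gt (by have := hxa i hi; linarith)
      have hinner : HasDerivAt (fun y : ℝ => -(y + a i)) (-1) x :=
        ((hasDerivAt_id' x).add_const (a i)).neg
      have := hinner.log hne
      convert this using 1
      rw [neg_div_neg_eq, one_div]
    have h3 : HasDerivAt (fun y : ℝ => Real.log (-(S y))) (S₁ x / S x) x := by
      have := ((hSd x).fun_neg).log (show -(S x) ≠ 0 from ne_of_gt (by linarith))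
      convert this using 1
      rw [neg_div_neg_eq]
    rw [hG, hG₁]
    exact (h1.fun_add (HasDerivAt.fun_sum h2)).fun_sub h3
  have hG₁d : ∀ x ∈ Set.Ioo (-b) (-c), HasDerivAt G₁ (G₂ x) x := by
    intro x hx
    obtain ⟨hx0, hxb, hxa, hSx⟩ := hxfacts x hx
    have h1 : HasDerivAt (fun y : ℝ => (y + b)⁻¹) (-1/(x + b)^2) x := by
      have := ((hasDerivAt_id' x).add_const b).fun_inv (ne_of_gt hxb)
      convert this using 1
    have h2 : ∀ i ∈ E, HasDerivAt (fun y : ℝ => (y + a i)⁻¹) (-1/(x + a i)^2) x := by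
      intro i hi
      have := ((hasDerivAt_id' x).add_const (a i)).fun_inv (ne_of_lt (hxa i hi))
      convert this using 1
    have h3 : HasDerivAt (fun y : ℝ => S₁ y / S y)
        ((S₂ x * S x - S₁ x * S₁ x) / S x ^ 2) x :=
      (hS₁d x).fun_div (hSd x) (ne_of_lt hSx)
    rw [hG₁, hG₂]
    exact (h1.fun_add (HasDerivAt.fun_sum h2)).fun_sub h3
  have hG₂neg : ∀ x ∈ Set.Ioo (-b) (-c), G₂ x < 0 := by
    intro x hx
    obtain ⟨hx0, hxb, hxa, hSx⟩ := hxfacts x hx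
    have hxne : x ≠ 0 := ne_of_lt hx0
    have hSne : S x ≠ 0 := ne_of_lt hSx
    have hx2 : (0:ℝ) < x^2 := (sq_nonneg x).lt_of_ne' (pow_ne_zero 2 hxne)
    have hS2 : (0:ℝ) < S x ^ 2 := (sq_nonneg (S x)).lt_of_ne' (pow_ne_zero 2 hSne)
    -- relate powers: x * S₁ x and x² * S₂ x
    have hT1 : x * S₁ x = ∑ j ∈ Finset.range m, B j * ((2*(j:ℝ)+1) * x ^ (2*j+1)) := by
      rw [hS₁, Finset.mul_sum]
      exact Finset.sum_congr rfl fun j _ => by ring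
    have hT2 : x * S₂ x = ∑ j ∈ Finset.range m, B j * ((2*(j:ℝ)+1) * (2*(j:ℝ) * x ^ (2*j))) := by
      rw [hS₂, Finset.mul_sum]
      refine Finset.sum_congr rfl fun j _ => ?_
      rcases Nat.eq_zero_or_pos j with rfl | hj
      · norm_num
      · obtain ⟨j', rfl⟩ : ∃ j', j = j' + 1 := ⟨j - 1, by omega⟩
        have he : 2 * (j' + 1) - 1 = 2 * j' + 1 := by omega
        rw [he]
        push_cast
        ring
    have hT2' : x^2 * S₂ x
        = ∑ j ∈ Finset.range m, B j * ((2*(j:ℝ)+1) * (2*(j:ℝ) * x ^ (2*j+1))) := by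
      have e : x^2 * S₂ x = x * (x * S₂ x) := by ring
      rw [e, hT2, Finset.mul_sum]
      exact Finset.sum_congr rfl fun j _ => by ring
    have hkey := aux_key m B hBnn x
    have hSX : (∑ j ∈ Finset.range m, B j * x ^ (2*j+1)) = S x := by rw [hS]
    rw [hSX, ← hT1, ← hT2'] at hkey
    -- hkey : (x * S₁ x)^2 - (x^2 * S₂ x) * S x ≤ (2m-1) * S x ^ 2
    have hfrac : (S₁ x * S₁ x - S₂ x * S x) / S x ^ 2 ≤ (2*(m:ℝ)-1) / x^2 := by
      rw [div_le_div_iff₀ hS2 hx2]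
      have e : (S₁ x * S₁ x - S₂ x * S x) * x^2 = (x * S₁ x)^2 - (x^2 * S₂ x) * S x := by
        ring
      rw [e]
      exact hkey
    -- the sum over E
    have hsumE : (∑ i ∈ E, -1/(x + a i)^2) ≤ (2*(m:ℝ)) * (-1/x^2) := by
      have per : ∀ i ∈ E, -1/(x + a i)^2 ≤ -1/x^2 := by
        intro i hi
        have h1 : x + a i < 0 := hxa i hi
        have h2 : 0 < a i := hpos i
        have hsq : (x + a i)^2 ≤ x^2 := by nlinarith
        have hsp : (0:ℝ) < (x + a i)^2 := (sq_nonneg _).lt_of_ne' (pow_ne_zero 2 (ne_of_lt h1))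
        have := one_div_le_one_div_of_le hsp hsq
        rw [neg_div, neg_div]
        exact neg_le_neg this
      calc (∑ i ∈ E, -1/(x + a i)^2) ≤ ∑ _i ∈ E, -1/x^2 := Finset.sum_le_sum per
        _ = (E.card : ℝ) * (-1/x^2) := by rw [Finset.sum_const, nsmul_eq_mul]
        _ = (2*(m:ℝ)) * (-1/x^2) := by
            rw [hcardE]
            congr 1
            have : n - 1 = 2 * m := by omega
            rw [this]
            push_cast
            ring
    have hb2 : (0:ℝ) < 1/(x + b)^2 := by
      have : (0:ℝ) < (x + b)^2 := (sq_nonneg _).lt_of_ne' (pow_ne_zero 2 (ne_of_gt hxb))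
      positivity
    have hx2' : (0:ℝ) < 1/x^2 := by
      have := hx2
      positivity
    have hflip : -((S₂ x * S x - S₁ x * S₁ x) / S x ^ 2)
        = (S₁ x * S₁ x - S₂ x * S x) / S x ^ 2 := by ring
    rw [hG₂]
    simp only
    have hrw : -1/(x+b)^2 = -(1/(x+b)^2) := by ring
    have h2m : (2*(m:ℝ)) * (-1/x^2) = -(2*(m:ℝ)) * (1/x^2) := by ring
    have hdiv : (2*(m:ℝ)-1) / x^2 = (2*(m:ℝ)-1) * (1/x^2) := by ring
    linarith [hfrac, hsumE]
  have hGanti : StrictAntiOn G₁ (Set.Ioo (-b) (-c)) := by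
    apply strictAntiOn_of_deriv_neg (convex_Ioo _ _)
    · exact fun x hx => (hG₁d x hx).continuousAt.continuousWithinAt
    · intro x hx
      rw [interior_Ioo] at hx
      rw [(hG₁d x hx).deriv]
      exact hG₂neg x hx
  -- roots of P are zeros of G on the interval
  have hroot : ∀ x ∈ Set.Ioo (-b) (-c), P x = 0 → G x = 0 := by
    intro x hx hPx
    obtain ⟨hx0, hxb, hxa, hSx⟩ := hxfacts x hx
    have hQpos : 0 < ∏ i ∈ E, (-(x + a i)) :=
      Finset.prod_pos fun i hi => by have := hxa i hi; linarith
    have hprod_eq : (∏ i, (x + a i)) = (x + b) * ∏ i ∈ E, (-(x + a i)) := by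
      rw [← Finset.mul_prod_erase Finset.univ _ (Finset.mem_univ lst)]
      congr 1
      have hterm : ∀ i ∈ E, (x + a i) = (-1) * (-(x + a i)) := fun i _ => by ring
      rw [Finset.prod_congr rfl hterm, Finset.prod_mul_distrib, Finset.prod_const, hcardE]
      have hpow : (-1:ℝ)^(n-1) = 1 := Even.neg_one_pow ⟨m, by omega⟩
      rw [hpow, one_mul]
    have heq : (x + b) * (∏ i ∈ E, (-(x + a i))) = -(S x) := by
      have := hP' x
      rw [hPx] at this
      rw [hSX' x] at this
      rw [hprod_eq] at this
      linarith
    rw [hG]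
    simp only
    have hlogprod : (∑ i ∈ E, Real.log (-(x + a i)))
        = Real.log (∏ i ∈ E, (-(x + a i))) :=
      (Real.log_prod (s := E) fun i hi => ne_of_gt (by have := hxa i hi; linarith)).symm
    rw [hlogprod, ← Real.log_mul (ne_of_gt hxb) (ne_of_gt hQpos), heq, sub_self]
  -- assemble
  apply aux_encard_le_two
  intro x y z hxm hym hzm hxy hyz
  obtain ⟨hxI, hxP⟩ := hxm
  obtain ⟨hyI, hyP⟩ := hym
  obtain ⟨hzI, hzP⟩ := hzm
  exact aux_no_three hGd hGanti hxI hyI hzI hxy hyz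
    (hroot x hxI hxP) (hroot y hyI hyP) (hroot z hzI hzP)
end Test

theorem lemma1_odd_P_roots
    (n : ℕ) (hn : 3 ≤ n) (hodd : Odd n)
    (a : Fin n → ℝ) (hpos : ∀ i, 0 < a i) (hmono : Monotone a)
    (A : ℕ → ℝ) (hA : ∀ k ∈ Finset.Icc 1 ((n - 1) / 2), 0 ≤ A k)
    (hA' : ∃ k ∈ Finset.Icc 1 ((n - 1) / 2), A k ≠ 0)
    (P : ℝ → ℝ)
    (hP : ∀ x, P x = (∏ i, (x + a i)) +
      ∑ k ∈ Finset.Icc 1 ((n - 1) / 2), A k * x ^ (2 * k - 1)) :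
    (∃! x, x ∈ Set.Ioo (-(a ⟨0, by omega⟩)) 0 ∧ P x = 0) ∧
    Set.encard {x ∈ Set.Ioo (-(a ⟨n - 1, by omega⟩)) (-(a ⟨n - 2, by omega⟩)) |
      P x = 0} ≤ 2 := by
  obtain ⟨m, hm⟩ := hodd
  have hm1 : 1 ≤ m := by omega
  -- reindex the coefficient sum
  set B : ℕ → ℝ := fun j => A (j + 1) with hB
  have hBnn : ∀ j < m, 0 ≤ B j := by
    intro j hj
    exact hA (j + 1) (Finset.mem_Icc.2 ⟨by omega, by omega⟩)
  have hBne : ∃ j < m, B j ≠ 0 := by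
    obtain ⟨k, hk, hk'⟩ := hA'
    obtain ⟨hk1, hk2⟩ := Finset.mem_Icc.1 hk
    refine ⟨k - 1, by omega, ?_⟩
    have : k - 1 + 1 = k := by omega
    rw [hB]; simpa [this] using hk'
  have hsum : ∀ x : ℝ, (∑ k ∈ Finset.Icc 1 ((n - 1) / 2), A k * x ^ (2 * k - 1))
      = ∑ j ∈ Finset.range m, B j * x ^ (2 * j + 1) := by
    intro x
    rw [← Finset.Ico_add_one_right_eq_Icc, Finset.sum_Ico_eq_sum_range]
    have hc : (n - 1) / 2 + 1 - 1 = m := by omega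
    rw [hc]
    refine Finset.sum_congr rfl fun j _ => ?_
    have he : 2 * (1 + j) - 1 = 2 * j + 1 := by omega
    rw [he, hB]
    norm_num [add_comm 1 j]
  have hP' : ∀ x, P x = (∏ i, (x + a i)) + ∑ j ∈ Finset.range m, B j * x ^ (2 * j + 1) := by
    intro x; rw [hP, hsum]
  clear hP hsum hA hA'
  -- basic continuity
  have hcont : Continuous P := by
    have hfun : P = fun x => (∏ i, (x + a i)) + ∑ j ∈ Finset.range m, B j * x ^ (2 * j + 1) :=
      funext hP'
    rw [hfun]
    exact (continuous_finset_prod _ fun i _ => continuous_id.add continuous_const).add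
      (continuous_finset_sum _ fun j _ => continuous_const.mul (continuous_pow _))
  set a0 : ℝ := a ⟨0, by omega⟩ with ha0
  have ha0pos : 0 < a0 := hpos _
  have ha0le : ∀ i : Fin n, a0 ≤ a i := fun i => hmono (by simp [Fin.le_def])
  -- sum is negative at negative points
  have hSneg : ∀ x : ℝ, x < 0 → (∑ j ∈ Finset.range m, B j * x ^ (2 * j + 1)) < 0 := by
    intro x hx
    have h0 : (0:ℝ) = ∑ _j ∈ Finset.range m, (0:ℝ) := by simp
    rw [h0]
    apply Finset.sum_lt_sum
    · intro j hj
      have : x ^ (2 * j + 1) < 0 := Odd.pow_neg ⟨j, by ring⟩ hx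
      exact mul_nonpos_of_nonneg_of_nonpos (hBnn j (Finset.mem_range.1 hj)) this.le
    · obtain ⟨j, hj, hj'⟩ := hBne
      refine ⟨j, Finset.mem_range.2 hj, ?_⟩
      have hxp : x ^ (2 * j + 1) < 0 := Odd.pow_neg ⟨j, by ring⟩ hx
      have hBj : 0 < B j := lt_of_le_of_ne (hBnn j hj) (Ne.symm hj')
      exact mul_neg_of_pos_of_neg hBj hxp
  -- Part 1
  have hPa0 : P (-a0) < 0 := by
    rw [hP']
    have hprod : (∏ i, (-a0 + a i)) = 0 :=
      Finset.prod_eq_zero (Finset.mem_univ ⟨0, by omega⟩) (by rw [← ha0]; ring)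
    rw [hprod, zero_add]
    exact hSneg _ (by linarith)
  have hP0 : 0 < P 0 := by
    rw [hP']
    have h2 : (∑ j ∈ Finset.range m, B j * (0:ℝ) ^ (2 * j + 1)) = 0 :=
      Finset.sum_eq_zero fun j _ => by rw [zero_pow (by omega)]; ring
    rw [h2, add_zero]
    exact Finset.prod_pos fun i _ => by simpa using hpos i
  have hmonoP : ∀ x ∈ Set.Ioo (-a0) (0:ℝ), ∀ y ∈ Set.Ioo (-a0) (0:ℝ), x < y → P x < P y := by
    intro x hx y hy hxy
    rw [hP', hP']
    have h1 : (∏ i, (x + a i)) < ∏ i, (y + a i) := by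
      apply Finset.prod_lt_prod
      · intro i _
        have := ha0le i
        have := hx.1
        linarith
      · intro i _; linarith
      · exact ⟨⟨0, by omega⟩, Finset.mem_univ _, by linarith⟩
    have h2 : (∑ j ∈ Finset.range m, B j * x ^ (2 * j + 1))
        ≤ ∑ j ∈ Finset.range m, B j * y ^ (2 * j + 1) := by
      apply Finset.sum_le_sum
      intro j hj
      exact mul_le_mul_of_nonneg_left
        ((Odd.strictMono_pow (R := ℝ) ⟨j, by ring⟩ hxy).le) (hBnn j (Finset.mem_range.1 hj))
    linarith
  have hpart1 : ∃! x, x ∈ Set.Ioo (-a0) (0:ℝ) ∧ P x = 0 := by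
    obtain ⟨x0, hx0, hx0P⟩ := intermediate_value_Ioo (by linarith : -a0 ≤ 0)
      hcont.continuousOn (⟨hPa0, hP0⟩ : (0:ℝ) ∈ Set.Ioo (P (-a0)) (P 0))
    refine ⟨x0, ⟨hx0, hx0P⟩, ?_⟩
    rintro y ⟨hy, hyP⟩
    by_contra hne
    rcases lt_or_gt_of_ne hne with h | h
    · have := hmonoP y hy x0 hx0 h; rw [hyP, hx0P] at this; exact lt_irrefl 0 this
    · have := hmonoP x0 hx0 y hy h; rw [hyP, hx0P] at this; exact lt_irrefl 0 this
  refine ⟨hpart1, ?_⟩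
  have hm2 : n = 2 * m + 1 := by omega
  exact part2 n m hn hm2 hm1 a hpos hmono B hBnn P hP' hSneg
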